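/- Let b₁, b₂ be integers with 0 ≤ b_i ≤ (r−1)(q−2)/r for i = 1,2 and b₁ + b₂ ≥ (r−1)(q−2)/r + 1. Then the dual toric codes are nested in the toric codes: C_{b₂}^⊥ ⊆ C_{b₁} and C_{b₁}^⊥ ⊆ C_{b₂}, where duals are taken with respect to the standard dot product on 𝔽_q^S. (The paper states this nesting under the hypothesis b₁ + b₂ ≥ (r−1)(q−2)/r.) -/

import Mathlib

/-- The toric code `C_b` over the finite field `F` with `q` elements: the `𝔽_q`-linear
span in `𝔽_q^S`, `S = 𝔽_q^* × 𝔽_q^*`, of the evaluation vectors `v_{(i,j)}` (with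
coordinate `t₁^i · t₂^j` at `(t₁,t₂) ∈ S`) for `(i,j)` ranging over the lattice points
of the polytope `□_b`, i.e. the pairs `(i,j) ∈ ℤ²` with `i ≥ 0`, `0 ≤ j ≤ q-2` and
`r·i + j ≤ r·b + (q-2)`. -/
def toricCode (F : Type*) [Field F] [Fintype F] (r b : ℕ) : Submodule F (Fˣ × Fˣ → F) :=
  Submodule.span F
    {f : Fˣ × Fˣ → F | ∃ i j : ℕ, j ≤ Fintype.card F - 2 ∧
      r * i + j ≤ r * b + (Fintype.card F - 2) ∧
      f = fun t : Fˣ × Fˣ => (t.1 : F) ^ i * (t.2 : F) ^ j}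

open Finset

section Aux

variable {F : Type*} [Field F] [Fintype F] [DecidableEq F]

private lemma kernel_sum' (n : ℕ) (hn : n = Fintype.card F - 1) (t s : Fˣ) :
    ∑ k ∈ Finset.range n, (t : F) ^ (n - k) * (s : F) ^ k = if s = t then -1 else 0 := by
  have hterm : ∀ k ∈ Finset.range n,
      (t : F) ^ (n - k) * (s : F) ^ k = (((s * t⁻¹ : Fˣ) : F)) ^ k := by
    intro k hk
    have hk' : k ≤ n := le_of_lt (mem_range.mp hk)
    have htn : (t : F) ^ n = 1 := by
      rw [hn]; exact FiniteField.pow_card_sub_one_eq_one _ t.ne_zero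
    rw [pow_sub₀ _ t.ne_zero hk', htn]
    push_cast
    field_simp
    rw [div_pow, mul_div_assoc', mul_div_cancel_left₀ _ (pow_ne_zero k t.ne_zero)]
  rw [Finset.sum_congr rfl hterm]
  by_cases hst : s = t
  · subst hst
    simp only [mul_inv_cancel, Units.val_one, one_pow, sum_const, card_range, nsmul_eq_mul,
      mul_one, if_pos rfl]
    rw [hn]
    have : ((Fintype.card F - 1 : ℕ) : F) = (Fintype.card F : ℕ) - 1 := by
      rw [Nat.cast_sub Fintype.card_pos]
      simp
    rw [this, Nat.cast_card_eq_zero]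
    norm_num
  · rw [if_neg hst]
    have hz : ((s * t⁻¹ : Fˣ) : F) ≠ 1 := by
      intro h
      apply hst
      have : (s * t⁻¹ : Fˣ) = 1 := Units.ext (by simpa using h)
      exact mul_inv_eq_one.mp this
    rw [geom_sum_eq hz]
    have : ((s * t⁻¹ : Fˣ) : F) ^ n = 1 := by
      rw [hn]; exact FiniteField.pow_card_sub_one_eq_one _ (Units.ne_zero _)
    rw [this]
    simp

private lemma fourier_expand (n : ℕ) (hn : n = Fintype.card F - 1) (u : Fˣ × Fˣ → F)
    (s : Fˣ × Fˣ) :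
    u s = ∑ k ∈ Finset.range n, ∑ l ∈ Finset.range n,
      (∑ t : Fˣ × Fˣ, u t * ((t.1 : F) ^ (n - k) * (t.2 : F) ^ (n - l))) *
        ((s.1 : F) ^ k * (s.2 : F) ^ l) := by
  symm
  calc
    ∑ k ∈ Finset.range n, ∑ l ∈ Finset.range n,
        (∑ t : Fˣ × Fˣ, u t * ((t.1 : F) ^ (n - k) * (t.2 : F) ^ (n - l))) *
          ((s.1 : F) ^ k * (s.2 : F) ^ l)
      = ∑ k ∈ Finset.range n, ∑ l ∈ Finset.range n, ∑ t : Fˣ × Fˣ,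
          u t * ((t.1 : F) ^ (n - k) * (s.1 : F) ^ k) *
            ((t.2 : F) ^ (n - l) * (s.2 : F) ^ l) := by
        apply sum_congr rfl; intro k _; apply sum_congr rfl; intro l _
        rw [Finset.sum_mul]; apply sum_congr rfl; intro t _; ring
    _ = ∑ k ∈ Finset.range n, ∑ t : Fˣ × Fˣ, ∑ l ∈ Finset.range n,
          u t * ((t.1 : F) ^ (n - k) * (s.1 : F) ^ k) *
            ((t.2 : F) ^ (n - l) * (s.2 : F) ^ l) :=
        sum_congr rfl (fun k _ => Finset.sum_comm)
    _ = ∑ t : Fˣ × Fˣ, ∑ k ∈ Finset.range n, ∑ l ∈ Finset.range n,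
          u t * ((t.1 : F) ^ (n - k) * (s.1 : F) ^ k) *
            ((t.2 : F) ^ (n - l) * (s.2 : F) ^ l) := Finset.sum_comm
    _ = ∑ t : Fˣ × Fˣ,
          u t * (∑ k ∈ Finset.range n, (t.1 : F) ^ (n - k) * (s.1 : F) ^ k) *
            (∑ l ∈ Finset.range n, (t.2 : F) ^ (n - l) * (s.2 : F) ^ l) := by
        apply sum_congr rfl; intro t _
        simp [Finset.mul_sum, Finset.sum_mul]
        rw [Finset.sum_comm]
    _ = ∑ t : Fˣ × Fˣ,
          u t * (if s.1 = t.1 then (-1 : F) else 0) * (if s.2 = t.2 then (-1 : F) else 0) := by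
        apply sum_congr rfl; intro t _
        rw [kernel_sum' n hn, kernel_sum' n hn]
    _ = u s := by
        rw [Fintype.sum_eq_single s]
        · simp
        · intro t ht
          rcases (by
            by_contra h
            push_neg at h
            exact ht (Prod.ext h.1.symm h.2.symm) : s.1 ≠ t.1 ∨ s.2 ≠ t.2) with h | h
          · simp [if_neg h]
          · simp [if_neg h]

private lemma arith' (r d b₁ b₂ k l : ℕ) (hr : 0 < r)
    (hsum : (r - 1) * d + 1 ≤ b₁ + b₂) (hk : k ≤ r * d) (hl : l ≤ r * d)
    (hbad : r * b₂ + r * d + 1 ≤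
      r * (if k = 0 then 0 else r * d + 1 - k) + (if l = 0 then 0 else r * d + 1 - l)) :
    r * k + l ≤ r * b₁ + r * d := by
  have hk0 : k ≠ 0 := by
    rintro rfl
    norm_num at hbad
    have h2 : (if l = 0 then 0 else r * d + 1 - l) ≤ r * d := by
      split
      · exact Nat.zero_le _
      · have hl1 : 1 ≤ l := Nat.one_le_iff_ne_zero.mpr ‹l ≠ 0›
        exact Nat.sub_le_iff_le_add.mpr (by linarith)
    linarith [le_trans hbad h2, Nat.zero_le (r * b₂)]
  rw [if_neg hk0] at hbad
  have hσl : (if l = 0 then 0 else r * d + 1 - l) ≤ r * d + 1 - l := by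
    split
    · exact Nat.zero_le _
    · exact le_rfl
  have hbad2 : r * b₂ + r * d + 1 ≤ r * (r * d + 1 - k) + (r * d + 1 - l) :=
    le_trans hbad (Nat.add_le_add_left hσl _)
  have hk' : k ≤ r * d + 1 := by linarith
  have hl' : l ≤ r * d + 1 := by linarith
  have hsum' : ((r : ℤ) - 1) * d + 1 ≤ b₁ + b₂ := by
    have := hsum
    zify [Nat.one_le_iff_ne_zero.mpr hr.ne'] at this
    exact this
  have hbad3 : (r : ℤ) * b₂ + r * d + 1 ≤ r * (r * d + 1 - k) + (r * d + 1 - l) := by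
    zify [hk', hl'] at hbad2
    exact hbad2
  have hmul : (r : ℤ) * (((r : ℤ) - 1) * d + 1) ≤ r * (b₁ + b₂) :=
    mul_le_mul_of_nonneg_left hsum' (by positivity)
  have goal' : (r : ℤ) * k + l ≤ r * b₁ + r * d := by nlinarith
  exact_mod_cast goal'

private lemma dual_sub (q : ℕ) (hq : q = Fintype.card F)
    (r : ℕ) (hr : 0 < r) (hdvd : r ∣ (q - 2))
    (b₁ b₂ : ℕ) (hsum : (r - 1) * (q - 2) / r + 1 ≤ b₁ + b₂) :
    {u : Fˣ × Fˣ → F | ∀ c ∈ toricCode F r b₂, ∑ s : Fˣ × Fˣ, u s * c s = 0}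
        ⊆ ↑(toricCode F r b₁) := by
  obtain ⟨d, hd⟩ := hdvd
  have hq2 : 2 ≤ q := hq ▸ Fintype.one_lt_card
  have hn : q - 1 = Fintype.card F - 1 := by omega
  have hdiv : (r - 1) * (q - 2) / r = (r - 1) * d := by
    rw [hd, show (r - 1) * (r * d) = r * ((r - 1) * d) by ring, Nat.mul_div_cancel_left _ hr]
  rw [hdiv] at hsum
  intro u hu
  set c : ℕ → ℕ → F :=
    fun k l => ∑ t : Fˣ × Fˣ, u t * ((t.1 : F) ^ (q - 1 - k) * (t.2 : F) ^ (q - 1 - l)) with hc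
  have hupow : ∀ (t : Fˣ) (x : ℕ),
      (t : F) ^ (q - 1 - x) = (t : F) ^ (if x = 0 then 0 else q - 1 - x) := by
    intro t x
    split
    · subst ‹x = 0›
      simp only [Nat.sub_zero, pow_zero]
      rw [hn]; exact FiniteField.pow_card_sub_one_eq_one _ t.ne_zero
    · rfl
  have hc0 : ∀ k l, k < q - 1 → l < q - 1 →
      r * (if k = 0 then 0 else q - 1 - k) + (if l = 0 then 0 else q - 1 - l)
        ≤ r * b₂ + (q - 2) →
      c k l = 0 := by
    intro k l hk hl hmem
    have hv : (fun t : Fˣ × Fˣ =>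
        (t.1 : F) ^ (if k = 0 then 0 else q - 1 - k) *
          (t.2 : F) ^ (if l = 0 then 0 else q - 1 - l))
        ∈ toricCode F r b₂ := by
      apply Submodule.subset_span
      refine ⟨_, _, ?_, ?_, rfl⟩
      · rw [← hq]
        split
        · exact Nat.zero_le _
        · omega
      · rw [← hq]; exact hmem
    have h0 := hu _ hv
    rw [hc]
    rw [← h0]
    apply Finset.sum_congr rfl
    intro t _
    rw [hupow t.1 k, hupow t.2 l]
  have hrep : u = ∑ p ∈ Finset.range (q - 1) ×ˢ Finset.range (q - 1),
      c p.1 p.2 • (fun s : Fˣ × Fˣ => (s.1 : F) ^ p.1 * (s.2 : F) ^ p.2) := by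
    funext s
    rw [fourier_expand (q - 1) hn u s]
    rw [Finset.sum_apply, Finset.sum_product]
    simp [hc]
  show u ∈ toricCode F r b₁
  rw [hrep]
  apply Submodule.sum_mem
  rintro ⟨k, l⟩ hp
  simp only [Finset.mem_product, Finset.mem_range] at hp
  obtain ⟨hk, hl⟩ := hp
  by_cases hcz : c k l = 0
  · simp only [hcz, zero_smul]
    exact Submodule.zero_mem _
  · apply Submodule.smul_mem
    apply Submodule.subset_span
    refine ⟨k, l, by omega, ?_, rfl⟩
    rw [← hq]
    have hbad' : r * b₂ + (q - 2) + 1 ≤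
        r * (if k = 0 then 0 else q - 1 - k) + (if l = 0 then 0 else q - 1 - l) :=
      Nat.not_le.mp (fun h => hcz (hc0 k l hk hl h))
    rw [hd, show q - 1 = r * d + 1 by omega] at hbad'
    have := arith' r d b₁ b₂ k l hr hsum (by omega) (by omega) hbad'
    omega

end Aux

/-- Let `q` be a prime power, `r` a positive integer dividing `q-2`,
and `b₁, b₂` integers with `0 ≤ bᵢ ≤ (r-1)(q-2)/r` and
`b₁ + b₂ ≥ (r-1)(q-2)/r + 1`.  Then the dual toric codes (with respect to the
standard dot product on `𝔽_q^S`) are nested in the toric codes: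
`C_{b₂}^⊥ ⊆ C_{b₁}` and `C_{b₁}^⊥ ⊆ C_{b₂}`. -/
theorem dual_toricCodes_nested
    {F : Type*} [Field F] [Fintype F] [DecidableEq F]
    (q : ℕ) (hq : q = Fintype.card F)
    (r : ℕ) (hr : 0 < r) (hdvd : r ∣ (q - 2))
    (b₁ b₂ : ℕ) (hb₁ : b₁ ≤ (r - 1) * (q - 2) / r) (hb₂ : b₂ ≤ (r - 1) * (q - 2) / r)
    (hsum : (r - 1) * (q - 2) / r + 1 ≤ b₁ + b₂) :
    {u : Fˣ × Fˣ → F | ∀ c ∈ toricCode F r b₂, ∑ s : Fˣ × Fˣ, u s * c s = 0}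
        ⊆ ↑(toricCode F r b₁) ∧
    {u : Fˣ × Fˣ → F | ∀ c ∈ toricCode F r b₁, ∑ s : Fˣ × Fˣ, u s * c s = 0}
        ⊆ ↑(toricCode F r b₂) := by
  exact ⟨dual_sub q hq r hr hdvd b₁ b₂ hsum,
    dual_sub q hq r hr hdvd b₂ b₁ (by omega)⟩
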